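/- arXiv:1706.02792 — 3 statements merged into one kernel-verified Lean document; each statement's English description precedes it below -/
import Mathlib

section
/- Let G = (V, E) be an undirected graph with nonnegative edge weights w, let d_w denote shortest-path distance under w, fix a, b ∈ V in the same connected component as all of V, and define p(v) = (d_w(a,v) + d_w(a,b) - d_w(v,b))/2. Define new weights w'(u,v) = w(u,v) - |p(u) - p(v)| for each edge (u,v) ∈ E. Then all new weights w' are nonnegative. -/
/-- The total weight of a walk in a graph, under edge weights `w`. -/
noncomputable def walkWeight {V : Type*} {G : SimpleGraph V} (w : V → V → ℝ)
    {x y : V} (p : G.Walk x y) : ℝ :=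
  (p.darts.map (fun d => w d.toProd.1 d.toProd.2)).sum

/-- Shortest-path distance between `x` and `y` in `G` under edge weights `w`. -/
noncomputable def spDist {V : Type*} (G : SimpleGraph V) (w : V → V → ℝ)
    (x y : V) : ℝ :=
  sInf {c : ℝ | ∃ p : G.Walk x y, walkWeight w p = c}

lemma walkWeight_nonneg {V : Type*} {G : SimpleGraph V} (w : V → V → ℝ)
    (hnn : ∀ u v, G.Adj u v → 0 ≤ w u v) {x y : V} (q : G.Walk x y) :
    0 ≤ walkWeight w q := by
  apply List.sum_nonneg
  intro r hr
  simp only [List.mem_map] at hr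
  obtain ⟨d, _, rfl⟩ := hr
  exact hnn _ _ d.adj

lemma spDist_set_nonempty {V : Type*} {G : SimpleGraph V} (hconn : G.Connected)
    (w : V → V → ℝ) (x y : V) :
    {c : ℝ | ∃ p : G.Walk x y, walkWeight w p = c}.Nonempty := by
  obtain ⟨q⟩ := hconn x y
  exact ⟨walkWeight w q, q, rfl⟩

lemma spDist_set_bdd {V : Type*} {G : SimpleGraph V}
    (w : V → V → ℝ) (hnn : ∀ u v, G.Adj u v → 0 ≤ w u v) (x y : V) :
    BddBelow {c : ℝ | ∃ p : G.Walk x y, walkWeight w p = c} := by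
  refine ⟨0, ?_⟩
  rintro c ⟨q, rfl⟩
  exact walkWeight_nonneg w hnn q

lemma spDist_le_append {V : Type*} {G : SimpleGraph V} (hconn : G.Connected)
    (w : V → V → ℝ) (hnn : ∀ u v, G.Adj u v → 0 ≤ w u v)
    {u v : V} (h : G.Adj v u) (a : V) :
    spDist G w a u ≤ spDist G w a v + w v u := by
  rw [← sub_le_iff_le_add]
  apply le_csInf (spDist_set_nonempty hconn w a v)
  rintro c ⟨q, rfl⟩
  rw [sub_le_iff_le_add]
  have : walkWeight w (q.append (SimpleGraph.Walk.cons h SimpleGraph.Walk.nil))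
      = walkWeight w q + w v u := by
    simp [walkWeight, SimpleGraph.Walk.darts_append]
  exact le_trans (csInf_le (spDist_set_bdd w hnn a u) ⟨_, this⟩) (le_of_eq rfl)

lemma spDist_le_cons {V : Type*} {G : SimpleGraph V} (hconn : G.Connected)
    (w : V → V → ℝ) (hnn : ∀ u v, G.Adj u v → 0 ≤ w u v)
    {u v : V} (h : G.Adj v u) (b : V) :
    spDist G w v b ≤ w v u + spDist G w u b := by
  rw [add_comm, ← sub_le_iff_le_add]
  apply le_csInf (spDist_set_nonempty hconn w u b)
  rintro c ⟨q, rfl⟩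
  rw [sub_le_iff_le_add']
  have : walkWeight w (SimpleGraph.Walk.cons h q) = w v u + walkWeight w q := by
    simp [walkWeight]
  exact csInf_le (spDist_set_bdd w hnn v b) ⟨_, this⟩

/-- FastMap edge-weight update preserves nonnegativity: with
`p(v) = (d_w(a,v) + d_w(a,b) - d_w(v,b))/2`, the updated weight
`w'(u,v) = w(u,v) - |p(u) - p(v)|` is nonnegative on every edge. -/
theorem fastmap_update_nonneg {V : Type*} [Fintype V] (G : SimpleGraph V)
    (hconn : G.Connected) (w : V → V → ℝ)
    (hsymm : ∀ u v, w u v = w v u)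
    (hnonneg : ∀ u v, G.Adj u v → 0 ≤ w u v)
    (a b : V) (p : V → ℝ)
    (hp : ∀ v, p v = (spDist G w a v + spDist G w a b - spDist G w v b) / 2)
    (w' : V → V → ℝ)
    (hw' : ∀ u v, w' u v = w u v - |p u - p v|) :
    ∀ u v, G.Adj u v → 0 ≤ w' u v := by
  intro u v huv
  rw [hw' u v, sub_nonneg, abs_le]
  have h1 : spDist G w a u ≤ spDist G w a v + w v u :=
    spDist_le_append hconn w hnonneg huv.symm a
  have h2 : spDist G w v b ≤ w v u + spDist G w u b :=
    spDist_le_cons hconn w hnonneg huv.symm b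
  have h3 : spDist G w a v ≤ spDist G w a u + w u v :=
    spDist_le_append hconn w hnonneg huv a
  have h4 : spDist G w u b ≤ w u v + spDist G w v b :=
    spDist_le_cons hconn w hnonneg huv b
  have hs := hsymm u v
  rw [hp u, hp v]
  constructor <;> linarith
end

section
/- Consider the FastMap iteration: w¹ = w, and for each i ≥ 1, pᵢ(v) = (d^i(aᵢ,v) + d^i(aᵢ,bᵢ) - d^i(v,bᵢ))/2 for some pivots aᵢ, bᵢ ∈ V, and w^{i+1}(u,v) = w^i(u,v) - |pᵢ(u) - pᵢ(v)| for each edge, where d^i is shortest-path distance under w^i. Then for every i, all weights w^i are nonnegative, hence d^i(x,y) ≥ 0 for all x, y ∈ V. -/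
namespace FastMapAux

variable {V : Type*} {G : SimpleGraph V}

lemma walkWeight_nonneg {w : V → V → ℝ} (h : ∀ u v, G.Adj u v → 0 ≤ w u v)
    {x y : V} (q : G.Walk x y) : 0 ≤ walkWeight w q := by
  apply List.sum_nonneg
  intro a ha
  simp only [List.mem_map] at ha
  obtain ⟨d, _, rfl⟩ := ha
  exact h _ _ d.adj

lemma walkWeight_cons {w : V → V → ℝ} {x y z : V} (h : G.Adj x y) (q : G.Walk y z) :
    walkWeight w (SimpleGraph.Walk.cons h q) = w x y + walkWeight w q := by
  simp [walkWeight]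

lemma walkWeight_append {w : V → V → ℝ} {x y z : V} (q : G.Walk x y) (r : G.Walk y z) :
    walkWeight w (q.append r) = walkWeight w q + walkWeight w r := by
  simp [walkWeight, SimpleGraph.Walk.darts_append]

lemma spDist_bddBelow {w : V → V → ℝ} (h : ∀ u v, G.Adj u v → 0 ≤ w u v) (x y : V) :
    BddBelow {c : ℝ | ∃ p : G.Walk x y, walkWeight w p = c} := by
  refine ⟨0, fun c hc => ?_⟩
  obtain ⟨q, rfl⟩ := hc
  exact walkWeight_nonneg h q

lemma spDist_le {w : V → V → ℝ} (h : ∀ u v, G.Adj u v → 0 ≤ w u v) {x y : V}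
    (q : G.Walk x y) : spDist G w x y ≤ walkWeight w q :=
  csInf_le (spDist_bddBelow h x y) ⟨q, rfl⟩

lemma spDist_nonneg (w : V → V → ℝ) (h : ∀ u v, G.Adj u v → 0 ≤ w u v) (x y : V) :
    0 ≤ spDist G w x y := by
  apply Real.sInf_nonneg
  intro c hc
  obtain ⟨q, rfl⟩ := hc
  exact walkWeight_nonneg h q

/-- prepend an edge: d(u,b) ≤ w u v + d(v,b) -/
lemma spDist_cons_le (hconn : G.Connected) {w : V → V → ℝ}
    (h : ∀ u v, G.Adj u v → 0 ≤ w u v) {u v b : V} (huv : G.Adj u v) :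
    spDist G w u b ≤ w u v + spDist G w v b := by
  have hne : {c : ℝ | ∃ q : G.Walk v b, walkWeight w q = c}.Nonempty := by
    obtain ⟨q⟩ := hconn.preconnected v b
    exact ⟨walkWeight w q, q, rfl⟩
  have : spDist G w u b - w u v ≤ spDist G w v b := by
    apply le_csInf hne
    rintro c ⟨q, rfl⟩
    have := spDist_le h (SimpleGraph.Walk.cons huv q)
    rw [walkWeight_cons] at this
    linarith
  linarith

/-- append an edge: d(a,u) ≤ d(a,v) + w v u -/
lemma spDist_append_le (hconn : G.Connected) {w : V → V → ℝ}
    (h : ∀ u v, G.Adj u v → 0 ≤ w u v) {a u v : V} (hvu : G.Adj v u) :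
    spDist G w a u ≤ spDist G w a v + w v u := by
  have hne : {c : ℝ | ∃ q : G.Walk a v, walkWeight w q = c}.Nonempty := by
    obtain ⟨q⟩ := hconn.preconnected a v
    exact ⟨walkWeight w q, q, rfl⟩
  have : spDist G w a u - w v u ≤ spDist G w a v := by
    apply le_csInf hne
    rintro c ⟨q, rfl⟩
    have := spDist_le h (q.append (SimpleGraph.Walk.cons hvu SimpleGraph.Walk.nil))
    have hnil : walkWeight w (SimpleGraph.Walk.nil : G.Walk u u) = 0 := by
      simp [walkWeight]
    rw [walkWeight_append, walkWeight_cons, hnil] at this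
    linarith
  linarith

end FastMapAux

/- FastMap iteration (0-indexed): `W 0` is the original weight function `w¹`;
`p i` is the coordinate produced in iteration `i` from pivots `A i`, `B i`
using the shortest-path distance `d^i = spDist G (W i)`; and
`W (i+1)` is the updated weight function on edges. -/
/-- Lemma 1 of the FastMap paper: at every iteration, all edge weights are
nonnegative, hence all shortest-path distances are nonnegative. -/
theorem fastmap_iter_nonneg {V : Type*} [Fintype V] (G : SimpleGraph V) (hconn : G.Connected) (w : V → V → ℝ)
    (hsymm : ∀ u v, w u v = w v u)
    (hnonneg : ∀ u v, G.Adj u v → 0 ≤ w u v)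
    (W : ℕ → V → V → ℝ) (hW0 : W 0 = w)
    (A B : ℕ → V) (p : ℕ → V → ℝ)
    (hp : ∀ i v, p i v = (spDist G (W i) (A i) v + spDist G (W i) (A i) (B i)
        - spDist G (W i) v (B i)) / 2)
    (hWsymm : ∀ i u v, W i u v = W i v u)
    (hWsucc : ∀ i u v, G.Adj u v → W (i + 1) u v = W i u v - |p i u - p i v|) :
    (∀ i u v, G.Adj u v → 0 ≤ W i u v) ∧
    (∀ i (x y : V), 0 ≤ spDist G (W i) x y) := by
  have key : ∀ i u v, G.Adj u v → 0 ≤ W i u v := by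
    intro i
    induction i with
    | zero => intro u v huv; rw [hW0]; exact hnonneg u v huv
    | succ i ih =>
      intro u v huv
      rw [hWsucc i u v huv]
      have h1 : spDist G (W i) (A i) u ≤ spDist G (W i) (A i) v + W i v u :=
        FastMapAux.spDist_append_le hconn ih huv.symm
      have h2 : spDist G (W i) (A i) v ≤ spDist G (W i) (A i) u + W i u v :=
        FastMapAux.spDist_append_le hconn ih huv
      have h3 : spDist G (W i) u (B i) ≤ W i u v + spDist G (W i) v (B i) :=
        FastMapAux.spDist_cons_le hconn ih huv
      have h4 : spDist G (W i) v (B i) ≤ W i v u + spDist G (W i) u (B i) :=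
        FastMapAux.spDist_cons_le hconn ih huv.symm
      have habs : |p i u - p i v| ≤ W i u v := by
        rw [abs_le, hp i u, hp i v]
        have hsym := hWsymm i u v
        constructor <;> [linarith; linarith]
      linarith [abs_nonneg (p i u - p i v)]
  exact ⟨key, fun i x y => FastMapAux.spDist_nonneg (W i) (key i) x y⟩
end

section
/- The FastMap heuristic h^i(x,g) = Σ_{j=1}^{i} |pⱼ(x) - pⱼ(g)| is consistent: for all nodes x, y, g and every i, h^i(x,g) ≤ d¹(x,y) + h^i(y,g), and h^i(g,g) = 0, where d¹ is the original shortest-path distance in the graph. -/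
section aux
variable {V : Type*} {G : SimpleGraph V} (wt : V → V → ℝ)

lemma walkWeight_nil {x : V} : walkWeight wt (SimpleGraph.Walk.nil : G.Walk x x) = 0 := by
  simp [walkWeight]

lemma walkWeight_cons {x y z : V} (h : G.Adj x y) (q : G.Walk y z) :
    walkWeight wt (SimpleGraph.Walk.cons h q) = wt x y + walkWeight wt q := by
  simp [walkWeight]

lemma walkWeight_append {x y z : V} (q : G.Walk x y) (r : G.Walk y z) :
    walkWeight wt (q.append r) = walkWeight wt q + walkWeight wt r := by
  simp [walkWeight, SimpleGraph.Walk.darts_append]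

lemma walkWeight_reverse (hs : ∀ u v, wt u v = wt v u) {x y : V} (q : G.Walk x y) :
    walkWeight wt q.reverse = walkWeight wt q := by
  induction q with
  | nil => simp
  | cons h q ih =>
    rw [SimpleGraph.Walk.reverse_cons, walkWeight_append, walkWeight_cons,
      ih, walkWeight_cons, walkWeight_nil]
    rw [hs]
    ring

lemma spDist_symm (hs : ∀ u v, wt u v = wt v u) (x y : V) :
    spDist G wt x y = spDist G wt y x := by
  unfold spDist
  congr 1
  ext c
  constructor
  · rintro ⟨q, rfl⟩; exact ⟨q.reverse, walkWeight_reverse wt hs q⟩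
  · rintro ⟨q, rfl⟩; exact ⟨q.reverse, walkWeight_reverse wt hs q⟩

variable (hnn : ∀ u v, G.Adj u v → 0 ≤ wt u v)

include hnn

lemma walkWeight_nonneg_s9 {x y : V} (q : G.Walk x y) : 0 ≤ walkWeight wt q := by
  induction q with
  | nil => simp [walkWeight_nil]
  | cons h q ih =>
    rw [walkWeight_cons]
    exact add_nonneg (hnn _ _ h) ih

lemma spDist_bddBelow (x y : V) :
    BddBelow {c : ℝ | ∃ p : G.Walk x y, walkWeight wt p = c} := by
  refine ⟨0, fun c hc => ?_⟩
  obtain ⟨q, rfl⟩ := hc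
  exact walkWeight_nonneg_s9 wt hnn q

lemma spDist_le_walkWeight {x y : V} (q : G.Walk x y) :
    spDist G wt x y ≤ walkWeight wt q :=
  csInf_le (spDist_bddBelow wt hnn x y) ⟨q, rfl⟩

lemma spDist_triangle_edge {x y : V} (hadj : G.Adj x y) (b : V)
    (hreach : G.Reachable y b) :
    spDist G wt x b ≤ wt x y + spDist G wt y b := by
  have key : spDist G wt x b - wt x y ≤ spDist G wt y b := by
    unfold spDist
    apply le_csInf
    · obtain ⟨q⟩ := hreach; exact ⟨walkWeight wt q, q, rfl⟩
    · rintro c ⟨q, rfl⟩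
      rw [sub_le_iff_le_add]
      calc spDist G wt x b ≤ walkWeight wt (SimpleGraph.Walk.cons hadj q) :=
            spDist_le_walkWeight wt hnn _
        _ = walkWeight wt q + wt x y := by rw [walkWeight_cons]; ring
  linarith

/-- Key: coordinate differences are bounded by edge weight. -/
lemma coord_diff_le (hs : ∀ u v, wt u v = wt v u) (hpre : G.Preconnected)
    {x y : V} (hadj : G.Adj x y) (a b : V) :
    |(spDist G wt a x + spDist G wt a b - spDist G wt x b) / 2 -
     (spDist G wt a y + spDist G wt a b - spDist G wt y b) / 2| ≤ wt x y := by
  have h1 : spDist G wt x b ≤ wt x y + spDist G wt y b :=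
    spDist_triangle_edge wt hnn hadj b (hpre y b)
  have h2 : spDist G wt y b ≤ wt y x + spDist G wt x b :=
    spDist_triangle_edge wt hnn hadj.symm b (hpre x b)
  have h3 : spDist G wt a x ≤ wt x y + spDist G wt a y := by
    rw [spDist_symm wt hs a x, spDist_symm wt hs a y]
    exact spDist_triangle_edge wt hnn hadj a (hpre y a)
  have h4 : spDist G wt a y ≤ wt y x + spDist G wt a x := by
    rw [spDist_symm wt hs a x, spDist_symm wt hs a y]
    exact spDist_triangle_edge wt hnn hadj.symm a (hpre x a)
  rw [hs y x] at h2 h4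
  rw [abs_le]
  constructor <;> [linarith; linarith]

end aux

/- FastMap iteration (0-indexed): `W 0` is the original weight function `w¹`;
`p i` is the coordinate produced in iteration `i` from pivots `A i`, `B i`
using the shortest-path distance `d^i = spDist G (W i)`; and
`W (i+1)` is the updated weight function on edges. -/
open Finset in
/-- Theorem 1 of the FastMap paper: the FastMap heuristic
`h^i(x,g) = ∑_{j<i} |pⱼ(x) - pⱼ(g)|` is consistent:
`h^i(x,g) ≤ d¹(x,y) + h^i(y,g)` and `h^i(g,g) = 0`. -/
theorem fastmap_consistent {V : Type*} [Fintype V] (G : SimpleGraph V) (hconn : G.Connected) (w : V → V → ℝ)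
    (hsymm : ∀ u v, w u v = w v u)
    (hnonneg : ∀ u v, G.Adj u v → 0 ≤ w u v)
    (W : ℕ → V → V → ℝ) (hW0 : W 0 = w)
    (A B : ℕ → V) (p : ℕ → V → ℝ)
    (hp : ∀ i v, p i v = (spDist G (W i) (A i) v + spDist G (W i) (A i) (B i)
        - spDist G (W i) v (B i)) / 2)
    (hWsymm : ∀ i u v, W i u v = W i v u)
    (hWsucc : ∀ i u v, G.Adj u v → W (i + 1) u v = W i u v - |p i u - p i v|)
    (h : ℕ → V → V → ℝ)
    (hh : ∀ i x y, h i x y = ∑ j ∈ Finset.range i, |p j x - p j y|) :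
    (∀ i (x y g : V), h i x g ≤ spDist G (W 0) x y + h i y g) ∧
    (∀ i (g : V), h i g g = 0) := by
  -- all iterated weights stay nonnegative on edges
  have hWnn : ∀ i, ∀ u v, G.Adj u v → 0 ≤ W i u v := by
    intro i
    induction i with
    | zero => rw [hW0]; exact hnonneg
    | succ i ih =>
      intro u v hadj
      rw [hWsucc i u v hadj]
      have hb := coord_diff_le (W i) ih (hWsymm i) hconn.preconnected hadj (A i) (B i)
      rw [← hp i u, ← hp i v] at hb
      linarith
  have hdiff : ∀ i u v, G.Adj u v → |p i u - p i v| ≤ W i u v := by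
    intro i u v hadj
    have hb := coord_diff_le (W i) (hWnn i) (hWsymm i) hconn.preconnected hadj (A i) (B i)
    rwa [← hp i u, ← hp i v] at hb
  -- telescoping bound on edges
  have hsum : ∀ i u v, G.Adj u v → ∑ j ∈ Finset.range i, |p j u - p j v| ≤ W 0 u v := by
    intro i u v hadj
    have htel : ∑ j ∈ Finset.range i, |p j u - p j v| = W 0 u v - W i u v := by
      induction i with
      | zero => simp
      | succ i ih => rw [Finset.sum_range_succ, ih, hWsucc i u v hadj]; ring
    rw [htel]
    have := hWnn i u v hadj
    linarith
  -- heuristic is bounded along any walk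
  have hwalk : ∀ i (g : V) {x y : V} (q : G.Walk x y),
      h i x g ≤ h i y g + walkWeight (W 0) q := by
    intro i g x y q
    induction q with
    | nil => simp [walkWeight_nil]
    | @cons u v _ hadj q ih =>
      rw [walkWeight_cons]
      have t1 : h i u g ≤ h i v g + ∑ j ∈ Finset.range i, |p j u - p j v| := by
        rw [hh, hh, ← Finset.sum_add_distrib]
        apply Finset.sum_le_sum
        intro j _
        calc |p j u - p j g| ≤ |p j u - p j v| + |p j v - p j g| := abs_sub_le _ _ _
          _ = |p j v - p j g| + |p j u - p j v| := add_comm _ _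
      have t2 := hsum i u v hadj
      linarith
  constructor
  · intro i x y g
    have hxg : h i x g - h i y g ≤ spDist G (W 0) x y := by
      unfold spDist
      apply le_csInf
      · obtain ⟨q⟩ := hconn.preconnected x y
        exact ⟨walkWeight (W 0) q, q, rfl⟩
      · rintro c ⟨q, rfl⟩
        have := hwalk i g q
        linarith
    linarith
  · intro i g
    rw [hh]
    simp
end
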